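/- For every y ≥ 1 and every x > 0, the Gamma function satisfies x^{-y} Γ(x + y) / Γ(x) ≤ (1 + y/x)^{y-1}. -/

import Mathlib

open Real

/-- Key step: Gautschi-type bound Γ(x+y) ≤ x·Γ(x)·(x+y)^(y-1), via log-convexity. -/
lemma stmt9_aux (x y : ℝ) (hx : 0 < x) (hy : 1 ≤ y) :
    Real.Gamma (x + y) ≤ x * Real.Gamma x * (x + y) ^ (y - 1) := by
  have hy0 : (0:ℝ) < y := lt_of_lt_of_le one_pos hy
  have hxy : 0 < x + y := by linarith
  have hGx : 0 < Gamma x := Gamma_pos_of_pos hx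
  have hGxy : 0 < Gamma (x + y) := Gamma_pos_of_pos hxy
  have ht0 : (0:ℝ) ≤ 1 / y := by positivity
  have ht1 : (0:ℝ) ≤ 1 - 1 / y := by
    have : 1 / y ≤ 1 := by rw [div_le_one hy0]; exact hy
    linarith
  have key := Real.convexOn_log_Gamma.2 (Set.mem_Ioi.mpr (by linarith : (0:ℝ) < x + 1))
    (Set.mem_Ioi.mpr (by linarith : (0:ℝ) < x + y + 1)) ht0 ht1 (by ring)
  have hpt : (1/y) • (x+1) + (1 - 1/y) • (x+y+1) = x + y := by
    simp only [smul_eq_mul]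
    field_simp
    ring
  rw [hpt] at key
  simp only [smul_eq_mul, Function.comp_apply] at key
  -- exponentiate
  have h1 : Gamma (x+y) ≤ Gamma (x+1) ^ (1/y) * Gamma (x+y+1) ^ (1 - 1/y) := by
    calc Gamma (x+y) = exp (log (Gamma (x+y))) := (exp_log hGxy).symm
      _ ≤ exp ((1/y) * log (Gamma (x+1)) + (1 - 1/y) * log (Gamma (x+y+1))) :=
          exp_le_exp.mpr key
      _ = Gamma (x+1) ^ (1/y) * Gamma (x+y+1) ^ (1 - 1/y) := by
          rw [exp_add, rpow_def_of_pos (Gamma_pos_of_pos (by linarith)),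
            rpow_def_of_pos (Gamma_pos_of_pos (by linarith)), mul_comm (log _), mul_comm (log _)]
  rw [Real.Gamma_add_one (ne_of_gt hx), show x + y + 1 = (x+y) + 1 by ring,
    Real.Gamma_add_one (ne_of_gt hxy)] at h1
  set A := Gamma (x+y) with hA
  set B := x * Gamma x with hB
  have hBpos : 0 < B := by positivity
  have h2 : A ^ (1/y) * A ^ (1 - 1/y) ≤ (B ^ (1/y) * (x+y) ^ (1 - 1/y)) * A ^ (1 - 1/y) := by
    calc A ^ (1/y) * A ^ (1 - 1/y) = A := by
          rw [← rpow_add hGxy]; norm_num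
      _ ≤ B ^ (1/y) * ((x+y) * A) ^ (1 - 1/y) := h1
      _ = (B ^ (1/y) * (x+y) ^ (1 - 1/y)) * A ^ (1 - 1/y) := by
          rw [mul_rpow (le_of_lt hxy) (le_of_lt hGxy)]; ring
  have h3 : A ^ (1/y) ≤ B ^ (1/y) * (x+y) ^ (1 - 1/y) :=
    le_of_mul_le_mul_right h2 (rpow_pos_of_pos hGxy _)
  have h4 := Real.rpow_le_rpow (le_of_lt (rpow_pos_of_pos hGxy _)) h3 (le_of_lt hy0)
  calc A = (A ^ (1/y)) ^ y := by
        rw [← rpow_mul (le_of_lt hGxy), one_div_mul_cancel (ne_of_gt hy0), rpow_one]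
    _ ≤ (B ^ (1/y) * (x+y) ^ (1 - 1/y)) ^ y := h4
    _ = B * (x+y) ^ (y - 1) := by
        rw [mul_rpow (le_of_lt (rpow_pos_of_pos hBpos _)) (le_of_lt (rpow_pos_of_pos hxy _)),
          ← rpow_mul (le_of_lt hBpos), ← rpow_mul (le_of_lt hxy)]
        have e1 : 1/y * y = 1 := by field_simp
        have e2 : (1 - 1/y) * y = y - 1 := by field_simp
        rw [e1, e2, rpow_one]

/-- For every y ≥ 1 and every x > 0, the Gamma function satisfies
x^{-y} Γ(x + y) / Γ(x) ≤ (1 + y/x)^{y-1}. -/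
theorem stmt9 (x y : ℝ) (hx : 0 < x) (hy : 1 ≤ y) :
    x ^ (-y) * Real.Gamma (x + y) / Real.Gamma x ≤ (1 + y / x) ^ (y - 1) := by
  have hy0 : (0:ℝ) < y := lt_of_lt_of_le one_pos hy
  have hxy : 0 < x + y := by linarith
  have hGx : 0 < Gamma x := Gamma_pos_of_pos hx
  have hmain := stmt9_aux x y hx hy
  have hxry : 0 < x ^ (-y) := rpow_pos_of_pos hx _
  have h1 : x ^ (-y) * Real.Gamma (x + y) / Real.Gamma x
      ≤ x ^ (-y) * (x * Gamma x * (x + y) ^ (y - 1)) / Gamma x := by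
    gcongr
  refine h1.trans (le_of_eq ?_)
  have hform : 1 + y / x = (x + y) / x := by field_simp
  rw [hform, Real.div_rpow (le_of_lt hxy) (le_of_lt hx)]
  rw [eq_div_iff (ne_of_gt (rpow_pos_of_pos hx _))]
  field_simp
  rw [show x ^ (-y) * x * x ^ (y - 1)
      = (x ^ (-y) * x ^ (y-1) * x) * 1 by ring,
    ← rpow_add hx, ← rpow_add_one (ne_of_gt hx)]
  have hz : -y + (y - 1) + 1 = 0 := by ring
  rw [hz, rpow_zero, one_mul]
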